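/- Let f and h be Schwartz functions on ℝ × ℝ³ with values in ℂ. For s > 0 define I(s) = ∫_{ℝ³} f(ω_k, k) · h(−ω_k, −k) / (2 ω_k) dk, where ω_k = √(‖k‖² + s). Then for every s > 0 the integral I(s) converges, I is differentiable at s, and I′(s) = ∫_{ℝ³} [ − f(ω_k, k) h(−ω_k, −k) / (4 ω_k³) + ( ∂₀f(ω_k, k) · h(−ω_k, −k) − f(ω_k, k) · ∂₀h(−ω_k, −k) ) / (4 ω_k²) ] dk, where ∂₀ denotes the partial derivative with respect to the first (time) variable. -/

import Mathlib

open MeasureTheory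

/-- `ω_k = √(‖k‖² + s)`. -/
noncomputable def omg (s : ℝ) (k : EuclideanSpace ℝ (Fin 3)) : ℝ :=
  Real.sqrt (‖k‖ ^ 2 + s)

lemma omg_pos {s : ℝ} (hs : 0 < s) (k : EuclideanSpace ℝ (Fin 3)) : 0 < omg s k :=
  Real.sqrt_pos.2 (by positivity)

lemma sqrt_le_omg (s : ℝ) (k : EuclideanSpace ℝ (Fin 3)) : Real.sqrt s ≤ omg s k :=
  Real.sqrt_le_sqrt (le_add_of_nonneg_left (by positivity))

lemma continuous_omg (s : ℝ) : Continuous (fun k : EuclideanSpace ℝ (Fin 3) => omg s k) :=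
  Real.continuous_sqrt.comp ((continuous_norm.pow 2).add continuous_const)

noncomputable def Cf (f : SchwartzMap (ℝ × EuclideanSpace ℝ (Fin 3)) ℂ) : ℝ :=
  2 ^ 4 * (Finset.Iic ((4 : ℕ), (1 : ℕ))).sup (fun m => SchwartzMap.seminorm ℝ m.1 m.2) f

lemma Cf_nonneg (f : SchwartzMap (ℝ × EuclideanSpace ℝ (Fin 3)) ℂ) : 0 ≤ Cf f := by
  have : 0 ≤ (Finset.Iic ((4 : ℕ), (1 : ℕ))).sup
      (fun m => SchwartzMap.seminorm ℝ m.1 m.2) f := apply_nonneg _ f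
  unfold Cf; positivity

lemma decay4 (f : SchwartzMap (ℝ × EuclideanSpace ℝ (Fin 3)) ℂ)
    (x : ℝ × EuclideanSpace ℝ (Fin 3)) : (1 + ‖x‖) ^ 4 * ‖f x‖ ≤ Cf f := by
  simpa [Cf, norm_iteratedFDeriv_zero] using
    SchwartzMap.one_add_le_sup_seminorm_apply (𝕜 := ℝ) (m := ((4 : ℕ), (1 : ℕ)))
      le_rfl (Nat.zero_le 1) f x

lemma fderiv_apply_le (f : SchwartzMap (ℝ × EuclideanSpace ℝ (Fin 3)) ℂ)
    (x : ℝ × EuclideanSpace ℝ (Fin 3)) :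
    ‖fderiv ℝ f x (1, 0)‖ ≤ ‖iteratedFDeriv ℝ 1 (⇑f) x‖ := by
  have h1 : fderiv ℝ f x (1, 0)
      = iteratedFDeriv ℝ 1 (⇑f) x (fun _ => ((1 : ℝ), (0 : EuclideanSpace ℝ (Fin 3)))) := by
    rw [iteratedFDeriv_one_apply]
  rw [h1]
  refine le_trans (ContinuousMultilinearMap.le_opNorm _ _) ?_
  have : ∀ i : Fin 1, ‖((1 : ℝ), (0 : EuclideanSpace ℝ (Fin 3)))‖ = 1 := by
    intro i; simp [Prod.norm_def]
  simp [Prod.norm_def]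

lemma decay4' (f : SchwartzMap (ℝ × EuclideanSpace ℝ (Fin 3)) ℂ)
    (x : ℝ × EuclideanSpace ℝ (Fin 3)) :
    (1 + ‖x‖) ^ 4 * ‖fderiv ℝ f x (1, 0)‖ ≤ Cf f := by
  have key : (1 + ‖x‖) ^ 4 * ‖iteratedFDeriv ℝ 1 (⇑f) x‖ ≤ Cf f := by
    simpa [Cf] using SchwartzMap.one_add_le_sup_seminorm_apply (𝕜 := ℝ)
      (m := ((4 : ℕ), (1 : ℕ))) le_rfl le_rfl f x
  have h0 : (0:ℝ) ≤ (1 + ‖x‖) ^ 4 := by positivity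
  exact le_trans (mul_le_mul_of_nonneg_left (fderiv_apply_le f x) h0) key

lemma deriv_fst (f : SchwartzMap (ℝ × EuclideanSpace ℝ (Fin 3)) ℂ) (x : ℝ)
    (k : EuclideanSpace ℝ (Fin 3)) :
    HasDerivAt (fun t : ℝ => f (t, k)) (fderiv ℝ f (x, k) (1, 0)) x := by
  have hfd : HasFDerivAt f (fderiv ℝ f (x, k)) (x, k) :=
    (f.smooth ⊤ |>.differentiable (by norm_num) (x, k)).hasFDerivAt
  exact hfd.comp_hasDerivAt x ((hasDerivAt_id x).prodMk (hasDerivAt_const x k))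

-- pointwise bounds at a point (x₀, k) with denominator only in k
lemma bnd_f (f : SchwartzMap (ℝ × EuclideanSpace ℝ (Fin 3)) ℂ) (x₀ : ℝ)
    (k : EuclideanSpace ℝ (Fin 3)) :
    ‖f (x₀, k)‖ ≤ Cf f / (1 + ‖k‖) ^ 4 := by
  rw [le_div_iff₀ (by positivity)]
  have hk : (1 + ‖k‖) ^ 4 ≤ (1 + ‖(x₀, k)‖) ^ 4 := by
    have : ‖k‖ ≤ ‖(x₀, k)‖ := norm_snd_le (x₀, k)
    have h1 : (0:ℝ) ≤ 1 + ‖k‖ := by positivity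
    exact pow_le_pow_left₀ h1 (by linarith) 4
  nlinarith [decay4 f (x₀, k), norm_nonneg (f (x₀, k)), hk]

lemma bnd_f_plain (f : SchwartzMap (ℝ × EuclideanSpace ℝ (Fin 3)) ℂ)
    (x : ℝ × EuclideanSpace ℝ (Fin 3)) : ‖f x‖ ≤ Cf f := by
  have := decay4 f x
  have h1 : (1:ℝ) ≤ (1 + ‖x‖) ^ 4 := one_le_pow₀ (by linarith [norm_nonneg x])
  nlinarith [norm_nonneg (f x)]

lemma bnd_df (f : SchwartzMap (ℝ × EuclideanSpace ℝ (Fin 3)) ℂ) (x₀ : ℝ)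
    (k : EuclideanSpace ℝ (Fin 3)) :
    ‖deriv (fun x : ℝ => f (x, k)) x₀‖ ≤ Cf f / (1 + ‖k‖) ^ 4 := by
  rw [(deriv_fst f x₀ k).deriv, le_div_iff₀ (by positivity)]
  have hk : (1 + ‖k‖) ^ 4 ≤ (1 + ‖(x₀, k)‖) ^ 4 := by
    have : ‖k‖ ≤ ‖(x₀, k)‖ := norm_snd_le (x₀, k)
    have h1 : (0:ℝ) ≤ 1 + ‖k‖ := by positivity
    exact pow_le_pow_left₀ h1 (by linarith) 4
  nlinarith [decay4' f (x₀, k), norm_nonneg (fderiv ℝ f (x₀, k) (1, 0)), hk]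

lemma bnd_df_plain (f : SchwartzMap (ℝ × EuclideanSpace ℝ (Fin 3)) ℂ) (x₀ : ℝ)
    (k : EuclideanSpace ℝ (Fin 3)) :
    ‖deriv (fun x : ℝ => f (x, k)) x₀‖ ≤ Cf f := by
  rw [(deriv_fst f x₀ k).deriv]
  have := decay4' f (x₀, k)
  have h1 : (1:ℝ) ≤ (1 + ‖(x₀, k)‖) ^ 4 := one_le_pow₀ (by linarith [norm_nonneg (x₀, k)])
  nlinarith [norm_nonneg (fderiv ℝ f (x₀, k) (1, 0))]
lemma hasDerivAt_omg {s : ℝ} (hs : 0 < s) (k : EuclideanSpace ℝ (Fin 3)) :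
    HasDerivAt (fun t => omg t k) (1 / (2 * omg s k)) s := by
  have h1 : HasDerivAt (fun t : ℝ => ‖k‖ ^ 2 + t) 1 s := (hasDerivAt_id s).const_add _
  have h2 := (Real.hasDerivAt_sqrt (x := ‖k‖ ^ 2 + s) (by positivity)).comp s h1
  have h3 : HasDerivAt (fun t => omg t k) (1 / (2 * Real.sqrt (‖k‖ ^ 2 + s)) * 1) s := h2
  rw [mul_one] at h3
  exact h3

lemma hasDerivAt_A (f : SchwartzMap (ℝ × EuclideanSpace ℝ (Fin 3)) ℂ) {s : ℝ} (hs : 0 < s)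
    (k : EuclideanSpace ℝ (Fin 3)) :
    HasDerivAt (fun t : ℝ => f (omg t k, k))
      (((1 / (2 * omg s k) : ℝ) : ℂ) * deriv (fun x : ℝ => f (x, k)) (omg s k)) s := by
  have hfd : HasFDerivAt f (fderiv ℝ f (omg s k, k)) (omg s k, k) :=
    (f.smooth ⊤ |>.differentiable (by norm_num) _).hasFDerivAt
  have hcurve : HasDerivAt (fun t : ℝ => (omg t k, k)) (1 / (2 * omg s k), 0) s :=
    (hasDerivAt_omg hs k).prodMk (hasDerivAt_const s k)
  have := hfd.comp_hasDerivAt s hcurve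
  have hval : fderiv ℝ f (omg s k, k) (1 / (2 * omg s k), 0)
      = ((1 / (2 * omg s k) : ℝ) : ℂ) * deriv (fun x : ℝ => f (x, k)) (omg s k) := by
    have h10 : ((1 / (2 * omg s k) : ℝ), (0 : EuclideanSpace ℝ (Fin 3)))
        = (1 / (2 * omg s k)) • ((1 : ℝ), (0 : EuclideanSpace ℝ (Fin 3))) := by
      simp [Prod.smul_mk]
    rw [h10, ContinuousLinearMap.map_smul, (deriv_fst f (omg s k) k).deriv, Complex.real_smul]
  rwa [hval] at this

lemma hasDerivAt_B (h : SchwartzMap (ℝ × EuclideanSpace ℝ (Fin 3)) ℂ) {s : ℝ} (hs : 0 < s)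
    (k : EuclideanSpace ℝ (Fin 3)) :
    HasDerivAt (fun t : ℝ => h (-omg t k, -k))
      (-(((1 / (2 * omg s k) : ℝ) : ℂ) * deriv (fun x : ℝ => h (x, -k)) (-omg s k))) s := by
  have hfd : HasFDerivAt h (fderiv ℝ h (-omg s k, -k)) (-omg s k, -k) :=
    (h.smooth ⊤ |>.differentiable (by norm_num) _).hasFDerivAt
  have hcurve : HasDerivAt (fun t : ℝ => (-omg t k, -k)) (-(1 / (2 * omg s k)), 0) s :=
    (hasDerivAt_omg hs k).neg.prodMk (hasDerivAt_const s (-k))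
  have := hfd.comp_hasDerivAt s hcurve
  have hval : fderiv ℝ h (-omg s k, -k) (-(1 / (2 * omg s k)), 0)
      = -(((1 / (2 * omg s k) : ℝ) : ℂ) * deriv (fun x : ℝ => h (x, -k)) (-omg s k)) := by
    have h10 : (-(1 / (2 * omg s k) : ℝ), (0 : EuclideanSpace ℝ (Fin 3)))
        = (-(1 / (2 * omg s k))) • ((1 : ℝ), (0 : EuclideanSpace ℝ (Fin 3))) := by
      simp [Prod.smul_mk]
    rw [h10, ContinuousLinearMap.map_smul, (deriv_fst h (-omg s k) (-k)).deriv, Complex.real_smul]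
    push_cast
    ring
  rwa [hval] at this

-- derivative of the full integrand
lemma hasDerivAt_F (f h : SchwartzMap (ℝ × EuclideanSpace ℝ (Fin 3)) ℂ) {s : ℝ} (hs : 0 < s)
    (k : EuclideanSpace ℝ (Fin 3)) :
    HasDerivAt (fun t : ℝ => f (omg t k, k) * h (-omg t k, -k) / (2 * (omg t k : ℂ)))
      (-(f (omg s k, k) * h (-omg s k, -k)) / (4 * (omg s k : ℂ) ^ 3) +
        (deriv (fun x : ℝ => f (x, k)) (omg s k) * h (-omg s k, -k) -
          f (omg s k, k) * deriv (fun x : ℝ => h (x, -k)) (-omg s k)) /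
          (4 * (omg s k : ℂ) ^ 2)) s := by
  have hω := omg_pos hs k
  have hωC : (omg s k : ℂ) ≠ 0 := Complex.ofReal_ne_zero.2 hω.ne'
  -- C(t) = ((2 * omg t k)⁻¹ : ℝ) : ℂ
  have hcR : HasDerivAt (fun t : ℝ => (2 * omg t k)⁻¹)
      (-(2 * (1 / (2 * omg s k))) / (2 * omg s k) ^ 2) s :=
    ((hasDerivAt_omg hs k).const_mul 2).inv (by positivity)
  have hC := hcR.ofReal_comp
  have hAB := (hasDerivAt_A f hs k).mul (hasDerivAt_B h hs k)
  have hABC := hAB.mul hC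
  have heq : (fun t : ℝ => f (omg t k, k) * h (-omg t k, -k) * (((2 * omg t k)⁻¹ : ℝ) : ℂ))
      = (fun t : ℝ => f (omg t k, k) * h (-omg t k, -k) / (2 * (omg t k : ℂ))) := by
    funext t
    push_cast
    rw [div_eq_mul_inv]
  simp only [Pi.mul_def] at hABC
  rw [heq] at hABC
  refine hABC.congr_deriv ?_
  push_cast
  field_simp
  ring

-- continuity of the integrands in k
lemma cont_F (f h : SchwartzMap (ℝ × EuclideanSpace ℝ (Fin 3)) ℂ) {t : ℝ} (ht : 0 < t) :
    Continuous (fun k : EuclideanSpace ℝ (Fin 3) =>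
      f (omg t k, k) * h (-omg t k, -k) / (2 * (omg t k : ℂ))) := by
  have hω := continuous_omg t
  have h1 : Continuous (fun k : EuclideanSpace ℝ (Fin 3) => f (omg t k, k)) :=
    f.continuous.comp (hω.prodMk continuous_id)
  have h2 : Continuous (fun k : EuclideanSpace ℝ (Fin 3) => h (-omg t k, -k)) :=
    h.continuous.comp (hω.neg.prodMk continuous_neg)
  have h3 : Continuous (fun k : EuclideanSpace ℝ (Fin 3) => (2 : ℂ) * (omg t k : ℂ)) :=
    continuous_const.mul (Complex.continuous_ofReal.comp hω)
  exact (h1.mul h2).div h3 (fun k => by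
    have := omg_pos ht k
    simp only [mul_ne_zero_iff, Ne, Complex.ofReal_eq_zero]
    exact ⟨two_ne_zero, this.ne'⟩)

lemma cont_df (f : SchwartzMap (ℝ × EuclideanSpace ℝ (Fin 3)) ℂ) {t : ℝ} (ht : 0 < t) :
    Continuous (fun k : EuclideanSpace ℝ (Fin 3) =>
      deriv (fun x : ℝ => f (x, k)) (omg t k)) := by
  have heq : (fun k : EuclideanSpace ℝ (Fin 3) => deriv (fun x : ℝ => f (x, k)) (omg t k))
      = fun k : EuclideanSpace ℝ (Fin 3) => fderiv ℝ f (omg t k, k) (1, 0) := by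
    funext k; exact (deriv_fst f (omg t k) k).deriv
  rw [heq]
  have hfder : Continuous (fderiv ℝ f) := (f.smooth ⊤).continuous_fderiv (by norm_num)
  exact (hfder.comp ((continuous_omg t).prodMk continuous_id)).clm_apply continuous_const

lemma cont_dh (h : SchwartzMap (ℝ × EuclideanSpace ℝ (Fin 3)) ℂ) {t : ℝ} (ht : 0 < t) :
    Continuous (fun k : EuclideanSpace ℝ (Fin 3) =>
      deriv (fun x : ℝ => h (x, -k)) (-omg t k)) := by
  have heq : (fun k : EuclideanSpace ℝ (Fin 3) => deriv (fun x : ℝ => h (x, -k)) (-omg t k))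
      = fun k : EuclideanSpace ℝ (Fin 3) => fderiv ℝ h (-omg t k, -k) (1, 0) := by
    funext k; exact (deriv_fst h (-omg t k) (-k)).deriv
  rw [heq]
  have hfder : Continuous (fderiv ℝ h) := (h.smooth ⊤).continuous_fderiv (by norm_num)
  exact (hfder.comp (((continuous_omg t).neg).prodMk continuous_neg)).clm_apply continuous_const

lemma cont_F' (f h : SchwartzMap (ℝ × EuclideanSpace ℝ (Fin 3)) ℂ) {t : ℝ} (ht : 0 < t) :
    Continuous (fun k : EuclideanSpace ℝ (Fin 3) =>
      -(f (omg t k, k) * h (-omg t k, -k)) / (4 * (omg t k : ℂ) ^ 3) +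
        (deriv (fun x : ℝ => f (x, k)) (omg t k) * h (-omg t k, -k) -
          f (omg t k, k) * deriv (fun x : ℝ => h (x, -k)) (-omg t k)) /
          (4 * (omg t k : ℂ) ^ 2)) := by
  have hω := continuous_omg t
  have h1 : Continuous (fun k : EuclideanSpace ℝ (Fin 3) => f (omg t k, k)) :=
    f.continuous.comp (hω.prodMk continuous_id)
  have h2 : Continuous (fun k : EuclideanSpace ℝ (Fin 3) => h (-omg t k, -k)) :=
    h.continuous.comp (hω.neg.prodMk continuous_neg)
  have hωC : Continuous (fun k : EuclideanSpace ℝ (Fin 3) => ((omg t k : ℝ) : ℂ)) :=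
    Complex.continuous_ofReal.comp hω
  have hne : ∀ (k : EuclideanSpace ℝ (Fin 3)) (n : ℕ),
      (4 : ℂ) * (omg t k : ℂ) ^ n ≠ 0 := fun k n => by
    have := omg_pos ht k
    simp only [mul_ne_zero_iff, Ne, pow_eq_zero_iff', Complex.ofReal_eq_zero]
    norm_num
    exact fun hc => absurd hc this.ne'
  refine Continuous.add ?_ ?_
  · exact (h1.mul h2).neg.div (continuous_const.mul (hωC.pow 3)) (fun k => hne k 3)
  · exact (((cont_df f ht).mul h2).sub (h1.mul (cont_dh h ht))).div
      (continuous_const.mul (hωC.pow 2)) (fun k => hne k 2)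

lemma norm_omg_complex {t : ℝ} (ht : 0 < t) (k : EuclideanSpace ℝ (Fin 3)) (n : ℕ) :
    ‖(4 : ℂ) * (omg t k : ℂ) ^ n‖ = 4 * omg t k ^ n := by
  have := omg_pos ht k
  simp [norm_mul, norm_pow, Complex.norm_real, Real.norm_eq_abs, abs_of_pos this]

/-- for Schwartz functions `f, h` on `ℝ × ℝ³` and `s > 0`, the
integral `I(s) = ∫ f(ω_k,k) h(−ω_k,−k)/(2ω_k) dk` (with `ω_k = √(‖k‖²+s)`)
converges, the integrand of its derivative is integrable, and `I` has at `s` the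
derivative
`∫ [ −f(ω_k,k)h(−ω_k,−k)/(4ω_k³)
   + (∂₀f(ω_k,k) h(−ω_k,−k) − f(ω_k,k) ∂₀h(−ω_k,−k))/(4ω_k²) ] dk`. -/
theorem hasDerivAt_two_point_integral
    (f h : SchwartzMap (ℝ × EuclideanSpace ℝ (Fin 3)) ℂ) (s : ℝ) (hs : 0 < s) :
    Integrable (fun k : EuclideanSpace ℝ (Fin 3) =>
      f (omg s k, k) * h (-omg s k, -k) / (2 * (omg s k : ℂ))) ∧
    Integrable (fun k : EuclideanSpace ℝ (Fin 3) =>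
      -(f (omg s k, k) * h (-omg s k, -k)) / (4 * (omg s k : ℂ) ^ 3) +
        (deriv (fun x : ℝ => f (x, k)) (omg s k) * h (-omg s k, -k) -
          f (omg s k, k) * deriv (fun x : ℝ => h (x, -k)) (-omg s k)) /
          (4 * (omg s k : ℂ) ^ 2)) ∧
    HasDerivAt
      (fun s' : ℝ => ∫ k : EuclideanSpace ℝ (Fin 3),
        f (omg s' k, k) * h (-omg s' k, -k) / (2 * (omg s' k : ℂ)))
      (∫ k : EuclideanSpace ℝ (Fin 3),
        (-(f (omg s k, k) * h (-omg s k, -k)) / (4 * (omg s k : ℂ) ^ 3) +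
          (deriv (fun x : ℝ => f (x, k)) (omg s k) * h (-omg s k, -k) -
            f (omg s k, k) * deriv (fun x : ℝ => h (x, -k)) (-omg s k)) /
            (4 * (omg s k : ℂ) ^ 2))) s := by
  have hε : (0:ℝ) < s / 2 := by linarith
  set δ := Real.sqrt (s / 2) with hδdef
  have hδ : 0 < δ := Real.sqrt_pos.2 hε
  have hD0 : 0 ≤ Cf f * Cf h := mul_nonneg (Cf_nonneg f) (Cf_nonneg h)
  -- integrable weight
  have hw : Integrable (fun k : EuclideanSpace ℝ (Fin 3) => ((1 + ‖k‖) ^ 4)⁻¹) := by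
    have h3 : ((Module.finrank ℝ (EuclideanSpace ℝ (Fin 3))) : ℝ) < (4:ℝ) := by
      simp [finrank_euclideanSpace]; norm_num
    have h4 := integrable_one_add_norm (μ := (volume : Measure (EuclideanSpace ℝ (Fin 3)))) h3
    refine h4.congr (Filter.Eventually.of_forall fun k => ?_)
    show (1 + ‖k‖) ^ (-(4:ℝ)) = ((1 + ‖k‖) ^ 4)⁻¹
    rw [Real.rpow_neg (by positivity), show (4:ℝ) = ((4:ℕ):ℝ) by norm_num,
      Real.rpow_natCast]
  -- ball membership gives positivity
  have hball : ∀ t ∈ Metric.ball s (s / 2), 0 < t := by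
    intro t ht
    rw [Metric.mem_ball, Real.dist_eq, abs_lt] at ht
    linarith [ht.1]
  have hδle : ∀ t ∈ Metric.ball s (s / 2), ∀ k, δ ≤ omg t k := by
    intro t ht k
    rw [Metric.mem_ball, Real.dist_eq, abs_lt] at ht
    refine le_trans (Real.sqrt_le_sqrt (by linarith [ht.1])) (sqrt_le_omg t k)
  have hδs : ∀ k, δ ≤ omg s k := fun k =>
    hδle s (by simp [Real.dist_eq, abs_of_nonneg, hε.le]; linarith) k
  -- uniform bound of F' on the ball
  have key_bound : ∀ (t : ℝ), 0 < t → (∀ k', δ ≤ omg t k') → ∀ k,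
      ‖-(f (omg t k, k) * h (-omg t k, -k)) / (4 * (omg t k : ℂ) ^ 3) +
        (deriv (fun x : ℝ => f (x, k)) (omg t k) * h (-omg t k, -k) -
          f (omg t k, k) * deriv (fun x : ℝ => h (x, -k)) (-omg t k)) /
          (4 * (omg t k : ℂ) ^ 2)‖ ≤
        Cf f * Cf h * (1 / (4 * δ ^ 3) + 2 / (4 * δ ^ 2)) * ((1 + ‖k‖) ^ 4)⁻¹ := by
    intro t ht hδt k
    have hω := omg_pos ht k
    have hδω := hδt k
    have hP : (0:ℝ) < (1 + ‖k‖) ^ 4 := by positivity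
    have hfb := bnd_f f (omg t k) k
    have hhb := bnd_f_plain h (-omg t k, -k)
    have hdfb := bnd_df f (omg t k) k
    have hdhb := bnd_df_plain h (-omg t k) (-k)
    have hfb' : ‖f (omg t k, k)‖ * (1 + ‖k‖) ^ 4 ≤ Cf f := by
      rw [← le_div_iff₀ hP]; exact hfb
    have hfk : ‖k‖ = ‖(-k : EuclideanSpace ℝ (Fin 3))‖ := (norm_neg k).symm
    have hdhb2 : ‖deriv (fun x : ℝ => h (x, -k)) (-omg t k)‖ ≤ Cf h := hdhb
    refine le_trans (norm_add_le _ _) ?_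
    have t1 : ‖-(f (omg t k, k) * h (-omg t k, -k)) / (4 * (omg t k : ℂ) ^ 3)‖ ≤
        Cf f * Cf h / (4 * δ ^ 3) * ((1 + ‖k‖) ^ 4)⁻¹ := by
      rw [norm_div, norm_neg, norm_mul, norm_omg_complex ht]
      have hden : 4 * δ ^ 3 ≤ 4 * omg t k ^ 3 := by
        have := pow_le_pow_left₀ hδ.le hδω 3; linarith
      have hnum : ‖f (omg t k, k)‖ * ‖h (-omg t k, -k)‖ ≤
          Cf f * Cf h * ((1 + ‖k‖) ^ 4)⁻¹ := by
        calc ‖f (omg t k, k)‖ * ‖h (-omg t k, -k)‖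
            ≤ (Cf f / (1 + ‖k‖) ^ 4) * Cf h :=
              mul_le_mul hfb hhb (norm_nonneg _) (div_nonneg (Cf_nonneg f) hP.le)
          _ = Cf f * Cf h * ((1 + ‖k‖) ^ 4)⁻¹ := by ring
      calc ‖f (omg t k, k)‖ * ‖h (-omg t k, -k)‖ / (4 * omg t k ^ 3)
          ≤ (Cf f * Cf h * ((1 + ‖k‖) ^ 4)⁻¹) / (4 * δ ^ 3) := by
            apply div_le_div₀ (mul_nonneg hD0 (inv_nonneg.2 hP.le)) hnum (by positivity) hden
        _ = Cf f * Cf h / (4 * δ ^ 3) * ((1 + ‖k‖) ^ 4)⁻¹ := by ring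
    have t2 : ‖(deriv (fun x : ℝ => f (x, k)) (omg t k) * h (-omg t k, -k) -
          f (omg t k, k) * deriv (fun x : ℝ => h (x, -k)) (-omg t k)) /
          (4 * (omg t k : ℂ) ^ 2)‖ ≤
        Cf f * Cf h * (2 / (4 * δ ^ 2)) * ((1 + ‖k‖) ^ 4)⁻¹ := by
      rw [norm_div, norm_omg_complex ht]
      have hden : 4 * δ ^ 2 ≤ 4 * omg t k ^ 2 := by
        have := pow_le_pow_left₀ hδ.le hδω 2; linarith
      have hnum : ‖deriv (fun x : ℝ => f (x, k)) (omg t k) * h (-omg t k, -k) -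
          f (omg t k, k) * deriv (fun x : ℝ => h (x, -k)) (-omg t k)‖ ≤
          2 * (Cf f * Cf h) * ((1 + ‖k‖) ^ 4)⁻¹ := by
        refine le_trans (norm_sub_le _ _) ?_
        have e1 : ‖deriv (fun x : ℝ => f (x, k)) (omg t k)‖ * ‖h (-omg t k, -k)‖ ≤
            (Cf f / (1 + ‖k‖) ^ 4) * Cf h :=
          mul_le_mul hdfb hhb (norm_nonneg _) (div_nonneg (Cf_nonneg f) hP.le)
        have e2 : ‖f (omg t k, k)‖ * ‖deriv (fun x : ℝ => h (x, -k)) (-omg t k)‖ ≤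
            (Cf f / (1 + ‖k‖) ^ 4) * Cf h :=
          mul_le_mul hfb hdhb2 (norm_nonneg _) (div_nonneg (Cf_nonneg f) hP.le)
        calc _ ≤ (Cf f / (1 + ‖k‖) ^ 4) * Cf h + (Cf f / (1 + ‖k‖) ^ 4) * Cf h := by
              rw [norm_mul, norm_mul]; exact add_le_add e1 e2
          _ = 2 * (Cf f * Cf h) * ((1 + ‖k‖) ^ 4)⁻¹ := by ring
      calc _ ≤ (2 * (Cf f * Cf h) * ((1 + ‖k‖) ^ 4)⁻¹) / (4 * δ ^ 2) := by
            apply div_le_div₀ (by positivity ) hnum (by positivity) hden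
        _ = Cf f * Cf h * (2 / (4 * δ ^ 2)) * ((1 + ‖k‖) ^ 4)⁻¹ := by ring
    calc _ ≤ Cf f * Cf h / (4 * δ ^ 3) * ((1 + ‖k‖) ^ 4)⁻¹ +
            Cf f * Cf h * (2 / (4 * δ ^ 2)) * ((1 + ‖k‖) ^ 4)⁻¹ := add_le_add t1 t2
      _ = Cf f * Cf h * (1 / (4 * δ ^ 3) + 2 / (4 * δ ^ 2)) * ((1 + ‖k‖) ^ 4)⁻¹ := by ring
  -- integrability of F s
  have hF_int : Integrable (fun k : EuclideanSpace ℝ (Fin 3) =>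
      f (omg s k, k) * h (-omg s k, -k) / (2 * (omg s k : ℂ))) := by
    refine ((hw.const_mul (Cf f * Cf h / (2 * δ))).mono'
      (cont_F f h hs).aestronglyMeasurable (Filter.Eventually.of_forall fun k => ?_))
    have hω := omg_pos hs k
    have hδω := hδs k
    have hP : (0:ℝ) < (1 + ‖k‖) ^ 4 := by positivity
    have hnrm : ‖(2 : ℂ) * (omg s k : ℂ)‖ = 2 * omg s k := by
      simp [norm_mul, Complex.norm_real, Real.norm_eq_abs, abs_of_pos hω]
    rw [norm_div, norm_mul, hnrm]
    have hnum : ‖f (omg s k, k)‖ * ‖h (-omg s k, -k)‖ ≤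
        Cf f * Cf h * ((1 + ‖k‖) ^ 4)⁻¹ := by
      calc ‖f (omg s k, k)‖ * ‖h (-omg s k, -k)‖
          ≤ (Cf f / (1 + ‖k‖) ^ 4) * Cf h :=
            mul_le_mul (bnd_f f (omg s k) k) (bnd_f_plain h _) (norm_nonneg _)
              (div_nonneg (Cf_nonneg f) hP.le)
        _ = Cf f * Cf h * ((1 + ‖k‖) ^ 4)⁻¹ := by ring
    calc ‖f (omg s k, k)‖ * ‖h (-omg s k, -k)‖ / (2 * omg s k)
        ≤ (Cf f * Cf h * ((1 + ‖k‖) ^ 4)⁻¹) / (2 * δ) := by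
          apply div_le_div₀ (mul_nonneg hD0 (inv_nonneg.2 hP.le)) hnum (by positivity)
            (by linarith)
      _ = Cf f * Cf h / (2 * δ) * ((1 + ‖k‖) ^ 4)⁻¹ := by ring
  -- the dominated convergence argument
  obtain ⟨hint', hderiv⟩ := hasDerivAt_integral_of_dominated_loc_of_deriv_le
    (μ := (volume : Measure (EuclideanSpace ℝ (Fin 3))))
    (F := fun t k => f (omg t k, k) * h (-omg t k, -k) / (2 * (omg t k : ℂ)))
    (F' := fun t k =>
      -(f (omg t k, k) * h (-omg t k, -k)) / (4 * (omg t k : ℂ) ^ 3) +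
        (deriv (fun x : ℝ => f (x, k)) (omg t k) * h (-omg t k, -k) -
          f (omg t k, k) * deriv (fun x : ℝ => h (x, -k)) (-omg t k)) /
          (4 * (omg t k : ℂ) ^ 2))
    (bound := fun k => Cf f * Cf h * (1 / (4 * δ ^ 3) + 2 / (4 * δ ^ 2)) * ((1 + ‖k‖) ^ 4)⁻¹)
    (Metric.ball_mem_nhds s hε)
    (by
      filter_upwards [Metric.ball_mem_nhds s hε] with t ht
      exact (cont_F f h (hball t ht)).aestronglyMeasurable)
    hF_int
    (cont_F' f h hs).aestronglyMeasurable
    (Filter.Eventually.of_forall fun k t ht =>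
      key_bound t (hball t ht) (hδle t ht) k)
    (hw.const_mul _)
    (Filter.Eventually.of_forall fun k t ht => hasDerivAt_F f h (hball t ht) k)
  exact ⟨hF_int, hint', hderiv⟩
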